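/- Let G be a matrix Lie group with Lie algebra 𝔤, and let f : G → 𝔤 and curves g : [0,T] → G, μ : [0,T] → 𝔤*, η : [0,T] → 𝔤 be differentiable, satisfying: g'(t) = g(t)·f(g(t)), μ'(t) = -g(t)*·[Df(g(t))]*μ(t) + ad*_{f(g(t))}μ(t), and η'(t) = Df(g(t))·(g(t)·η(t)) - ad_{f(g(t))}η(t). Then the pairing ⟨μ(t), η(t)⟩ is constant in t. -/

import Mathlib

open Matrix

attribute [local instance] Matrix.frobeniusNormedAddCommGroup Matrix.frobeniusNormedSpace

set_option maxHeartbeats 1000000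

/-- Quadratic conservation law for the left-trivialized adjoint system and the
left-trivialized variational system on a matrix Lie group: along solutions
`g' = g·f(g)`, `⟨μ', η̃⟩ = -⟨μ, Df(g)(g·η̃)⟩ + ⟨μ, ad_{f(g)} η̃⟩` and
`η' = Df(g)(g·η) - ad_{f(g)} η`, the pairing `⟨μ(t), η(t)⟩ = Tr(μ(t)ᵀ η(t))`
is constant on `[0,T]`. -/
theorem adjoint_variational_pairing_constant
    {n : ℕ} (T : ℝ) (hT : 0 ≤ T)
    (f : Matrix (Fin n) (Fin n) ℝ → Matrix (Fin n) (Fin n) ℝ)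
    (Df : Matrix (Fin n) (Fin n) ℝ →
      (Matrix (Fin n) (Fin n) ℝ →L[ℝ] Matrix (Fin n) (Fin n) ℝ))
    (g μ η ν : ℝ → Matrix (Fin n) (Fin n) ℝ)
    (hDf : ∀ t ∈ Set.Icc (0:ℝ) T, HasFDerivAt f (Df (g t)) (g t))
    (hg : ∀ t ∈ Set.Icc (0:ℝ) T, HasDerivAt g (g t * f (g t)) t)
    (hμ : ∀ t ∈ Set.Icc (0:ℝ) T, HasDerivAt μ (ν t) t)
    (hν : ∀ t ∈ Set.Icc (0:ℝ) T, ∀ w : Matrix (Fin n) (Fin n) ℝ,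
      Matrix.trace ((ν t)ᵀ * w)
        = -Matrix.trace ((μ t)ᵀ * (Df (g t) (g t * w)))
          + Matrix.trace ((μ t)ᵀ * (f (g t) * w - w * f (g t))))
    (hη : ∀ t ∈ Set.Icc (0:ℝ) T, HasDerivAt η
      (Df (g t) (g t * η t) - (f (g t) * η t - η t * f (g t))) t) :
    ∀ s ∈ Set.Icc (0:ℝ) T, ∀ t ∈ Set.Icc (0:ℝ) T,
      Matrix.trace ((μ s)ᵀ * η s) = Matrix.trace ((μ t)ᵀ * η t) := by
  classical
  -- entrywise differentiation
  have hE : ∀ (i j : Fin n) (φ : ℝ → Matrix (Fin n) (Fin n) ℝ)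
      (φ' : Matrix (Fin n) (Fin n) ℝ) (t : ℝ), HasDerivAt φ φ' t →
      HasDerivAt (fun t => φ t i j) (φ' i j) t := by
    intro i j φ φ' t h
    have := ((Matrix.entryLinearMap ℝ ℝ i j).toContinuousLinearMap.hasFDerivAt
      (x := φ t)).comp_hasDerivAt t h
    exact this
  -- trace of Aᵀ B as a double sum
  have hrepr : ∀ A B : Matrix (Fin n) (Fin n) ℝ,
      Matrix.trace (Aᵀ * B) = ∑ i, ∑ j, A i j * B i j := by
    intro A B
    rw [Finset.sum_comm]
    simp [Matrix.trace, Matrix.diag, Matrix.mul_apply, Matrix.transpose_apply]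
  have key : ∀ t ∈ Set.Icc (0:ℝ) T,
      HasDerivAt (fun t => Matrix.trace ((μ t)ᵀ * η t)) 0 t := by
    intro t ht
    set D := Df (g t) (g t * η t) - (f (g t) * η t - η t * f (g t)) with hD
    have hsum : HasDerivAt (fun t => ∑ i, ∑ j, μ t i j * η t i j)
        (∑ i, ∑ j, (ν t i j * η t i j + μ t i j * D i j)) t := by
      refine HasDerivAt.fun_sum fun i _ => HasDerivAt.fun_sum fun j _ => ?_
      exact (hE i j μ (ν t) t (hμ t ht)).mul (hE i j η D t (hη t ht))
    have hval : (∑ i, ∑ j, (ν t i j * η t i j + μ t i j * D i j)) = 0 := by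
      have h1 : (∑ i, ∑ j, (ν t i j * η t i j + μ t i j * D i j))
          = Matrix.trace ((ν t)ᵀ * η t) + Matrix.trace ((μ t)ᵀ * D) := by
        rw [hrepr, hrepr, ← Finset.sum_add_distrib]
        refine Finset.sum_congr rfl fun i _ => ?_
        rw [← Finset.sum_add_distrib]
      rw [h1, hν t ht (η t)]
      simp only [hD, mul_sub, Matrix.trace_sub]
      ring
    have hfun : (fun t => Matrix.trace ((μ t)ᵀ * η t))
        = fun t => ∑ i, ∑ j, μ t i j * η t i j := funext fun t => hrepr _ _
    rw [hfun, ← hval]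
    exact hsum
  intro s hs t ht
  have hconv : Convex ℝ (Set.Icc (0:ℝ) T) := convex_Icc 0 T
  have hle := hconv.norm_image_sub_le_of_norm_hasDerivWithin_le
    (f' := fun _ => (0:ℝ)) (C := 0)
    (fun x hx => (key x hx).hasDerivWithinAt)
    (fun x _ => by simp) hs ht
  have h1 : ‖Matrix.trace ((μ t)ᵀ * η t) - Matrix.trace ((μ s)ᵀ * η s)‖ ≤ 0 := by
    simpa using hle
  have h2 := norm_nonneg (Matrix.trace ((μ t)ᵀ * η t) - Matrix.trace ((μ s)ᵀ * η s))
  have h0 : Matrix.trace ((μ t)ᵀ * η t) - Matrix.trace ((μ s)ᵀ * η s) = 0 :=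
    norm_eq_zero.mp (le_antisymm h1 h2)
  linarith [sub_eq_zero.mp h0]
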